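/- (Mond–Pečarić) Let Z be positive definite with extremal eigenvalues a ≥ b > 0, and let E be an orthogonal projection onto a subspace ℰ. Then, identifying compressions with operators on ℰ, (Z_ℰ)⁻¹ ≥ (4ab/(a+b)²) · (Z⁻¹)_ℰ, where X_ℰ denotes the compression EXE restricted to ℰ. -/

import Mathlib

open scoped ComplexOrder
open Matrix

lemma psd_smul_real {m : Type*} [Fintype m] {M : Matrix m m ℂ} (hM : M.PosSemidef)
    {c : ℝ} (hc : 0 ≤ c) : (c • M).PosSemidef := by
  rw [posSemidef_iff_dotProduct_mulVec]
  constructor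
  · unfold Matrix.IsHermitian
    rw [conjTranspose_smul, hM.1, star_trivial]
  · intro x
    rw [smul_mulVec, dotProduct_smul]
    have := hM.dotProduct_mulVec_nonneg x
    rw [Complex.real_smul]
    exact mul_nonneg (Complex.zero_le_real.2 hc) this

lemma aux_spec {m : Type*} [Fintype m] [DecidableEq m] {A : Matrix m m ℂ} (hA : A.PosDef)
    (p q r : ℝ)
    (h : ∀ i, 0 ≤ p + q * hA.1.eigenvalues i + r * (hA.1.eigenvalues i)⁻¹) :
    (p • (1 : Matrix m m ℂ) + q • A + r • A⁻¹).PosSemidef := by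
  have hpos := hA.eigenvalues_pos
  obtain ⟨ev, hev⟩ : ∃ ev : m → ℝ, hA.1.eigenvalues = ev := ⟨_, rfl⟩
  rw [hev] at h hpos
  obtain ⟨U, hUeq⟩ : ∃ U : Matrix m m ℂ, (hA.1.eigenvectorUnitary : Matrix m m ℂ) = U :=
    ⟨_, rfl⟩
  have hUU : U * star U = 1 := by
    rw [← hUeq]; exact Matrix.mem_unitaryGroup_iff.mp hA.1.eigenvectorUnitary.2
  have hUU' : star U * U = 1 := by
    rw [← hUeq]; exact Matrix.mem_unitaryGroup_iff'.mp hA.1.eigenvectorUnitary.2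
  have hspec : A = U * diagonal (RCLike.ofReal ∘ ev) * star U := by
    rw [← hUeq, ← hev]; exact hA.1.spectral_theorem
  have hinv : A⁻¹ = U * diagonal (fun i => ((ev i : ℂ))⁻¹) * star U := by
    apply inv_eq_right_inv
    have h1 : (fun i => (RCLike.ofReal ∘ ev) i * ((ev i : ℂ))⁻¹) = fun _ => (1 : ℂ) := by
      funext i
      have : ((ev i : ℂ)) ≠ 0 := by exact_mod_cast (hpos i).ne'
      simp [mul_inv_cancel₀ this]
    rw [hspec]
    simp only [Matrix.mul_assoc]
    rw [← Matrix.mul_assoc (star U), hUU', one_mul,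
      ← Matrix.mul_assoc (diagonal (RCLike.ofReal ∘ ev)), diagonal_mul_diagonal, h1,
      diagonal_one, one_mul, hUU]
  have hΔ : p • (1 : Matrix m m ℂ) + q • diagonal (RCLike.ofReal ∘ ev)
      + r • diagonal (fun i => ((ev i : ℂ))⁻¹)
      = diagonal (fun i => ((p + q * ev i + r * (ev i)⁻¹ : ℝ) : ℂ)) := by
    ext i j
    by_cases hij : i = j <;>
      simp [hij, diagonal_apply, Matrix.one_apply, Complex.real_smul] <;> push_cast <;> ring
  have key : p • (1 : Matrix m m ℂ) + q • A + r • A⁻¹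
      = U * diagonal (fun i => ((p + q * ev i + r * (ev i)⁻¹ : ℝ) : ℂ)) * star U := by
    rw [← hΔ, Matrix.mul_add, Matrix.mul_add, Matrix.add_mul, Matrix.add_mul,
      Matrix.mul_smul, Matrix.mul_smul, Matrix.mul_smul, Matrix.smul_mul, Matrix.smul_mul,
      Matrix.smul_mul, Matrix.mul_one, hUU, ← hspec, ← hinv]
  rw [key, Matrix.star_eq_conjTranspose U]
  exact Matrix.PosSemidef.mul_mul_conjTranspose_same
    (Matrix.posSemidef_diagonal_iff.mpr fun i => Complex.zero_le_real.2 (h i)) U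

/-- Mond–Pečarić inequality. The subspace `ℰ` is represented by an isometry `V` whose columns
form an orthonormal basis of `ℰ`, so the compression `X_ℰ` is `Vᴴ * X * V`. -/
theorem stmt_10 (n k : ℕ) (Z : Matrix (Fin n) (Fin n) ℂ) (hZ : Z.PosDef) (a b : ℝ)
    (ha : ∀ i, hZ.1.eigenvalues i ≤ a) (ha' : ∃ i, hZ.1.eigenvalues i = a)
    (hb : ∀ i, b ≤ hZ.1.eigenvalues i) (hb' : ∃ i, hZ.1.eigenvalues i = b)
    (V : Matrix (Fin n) (Fin k) ℂ) (hV : Vᴴ * V = 1) (hk : 0 < k) :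
    ((Vᴴ * Z * V)⁻¹ - (4 * a * b / (a + b) ^ 2 : ℝ) • (Vᴴ * Z⁻¹ * V)).PosSemidef := by
  have hb0 : 0 < b := by
    obtain ⟨i, hi⟩ := hb'
    have := hZ.eigenvalues_pos i
    rwa [hi] at this
  have ha0 : 0 < a := by
    obtain ⟨i, hi⟩ := ha'
    have := hZ.eigenvalues_pos i
    rwa [hi] at this
  have hab : 0 < a + b := by linarith
  have hab2 : ((a + b) : ℝ) ^ 2 ≠ 0 := pow_ne_zero 2 hab.ne'
  -- Step 1: (a+b)•1 - Z - ab•Z⁻¹ is PSD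
  have h1 : ((a + b) • (1 : Matrix (Fin n) (Fin n) ℂ) + (-1 : ℝ) • Z
      + (-(a * b) : ℝ) • Z⁻¹).PosSemidef := by
    apply aux_spec hZ
    intro i
    have ht := hZ.eigenvalues_pos i
    have h2 := ha i
    have h3 := hb i
    have h4 : hZ.1.eigenvalues i * (hZ.1.eigenvalues i)⁻¹ = 1 := mul_inv_cancel₀ ht.ne'
    have h5 : 0 < (hZ.1.eigenvalues i)⁻¹ := inv_pos.mpr ht
    nlinarith [mul_nonneg (sub_nonneg.mpr h2) (sub_nonneg.mpr h3),
      mul_pos h5 ht, mul_nonneg (mul_nonneg (sub_nonneg.mpr h2) (sub_nonneg.mpr h3)) h5.le]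
  -- Y := Vᴴ Z V is positive definite
  have hY : (Vᴴ * Z * V).PosDef := by
    refine .of_dotProduct_mulVec_pos (isHermitian_conjTranspose_mul_mul V hZ.1) fun x hx => ?_
    have hVx : V *ᵥ x ≠ 0 := by
      intro h0
      apply hx
      have h2 := congrArg (fun v => Vᴴ *ᵥ v) h0
      simpa [Matrix.mulVec_mulVec, hV] using h2
    simpa only [star_mulVec, dotProduct_mulVec, vecMul_vecMul] using hZ.dotProduct_mulVec_pos hVx
  -- Step 2: Y⁻¹ + (4/(a+b)²)•Y - (4/(a+b))•1 is PSD
  have h2 : ((-(4 / (a + b) ^ 2 * (a + b))) • (1 : Matrix (Fin k) (Fin k) ℂ)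
      + (4 / (a + b) ^ 2 : ℝ) • (Vᴴ * Z * V) + (1 : ℝ) • (Vᴴ * Z * V)⁻¹).PosSemidef := by
    apply aux_spec hY
    intro i
    have hμ := hY.eigenvalues_pos i
    set μ := hY.1.eigenvalues i with hμdef
    have key : -(4 / (a + b) ^ 2 * (a + b)) + 4 / (a + b) ^ 2 * μ + 1 * μ⁻¹
        = ((a + b) - 2 * μ) ^ 2 / ((a + b) ^ 2 * μ) := by
      field_simp
      ring
    rw [key]
    positivity
  -- Step 3: compress step 1
  have h3 : (Vᴴ * ((a + b) • (1 : Matrix (Fin n) (Fin n) ℂ) + (-1 : ℝ) • Z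
      + (-(a * b) : ℝ) • Z⁻¹) * V).PosSemidef := h1.conjTranspose_mul_mul_same V
  have h4 : Vᴴ * ((a + b) • (1 : Matrix (Fin n) (Fin n) ℂ) + (-1 : ℝ) • Z
      + (-(a * b) : ℝ) • Z⁻¹) * V
      = (a + b) • (1 : Matrix (Fin k) (Fin k) ℂ) + (-1 : ℝ) • (Vᴴ * Z * V)
        + (-(a * b) : ℝ) • (Vᴴ * Z⁻¹ * V) := by
    simp only [Matrix.mul_add, Matrix.add_mul, Matrix.mul_smul, Matrix.smul_mul,
      Matrix.mul_one, hV, Matrix.mul_assoc]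
  rw [h4] at h3
  have h5 : ((4 / (a + b) ^ 2 : ℝ) • ((a + b) • (1 : Matrix (Fin k) (Fin k) ℂ)
      + (-1 : ℝ) • (Vᴴ * Z * V) + (-(a * b) : ℝ) • (Vᴴ * Z⁻¹ * V))).PosSemidef :=
    psd_smul_real h3 (by positivity)
  have heq : (Vᴴ * Z * V)⁻¹ - (4 * a * b / (a + b) ^ 2 : ℝ) • (Vᴴ * Z⁻¹ * V)
      = ((-(4 / (a + b) ^ 2 * (a + b))) • (1 : Matrix (Fin k) (Fin k) ℂ)
        + (4 / (a + b) ^ 2 : ℝ) • (Vᴴ * Z * V) + (1 : ℝ) • (Vᴴ * Z * V)⁻¹)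
      + ((4 / (a + b) ^ 2 : ℝ) • ((a + b) • (1 : Matrix (Fin k) (Fin k) ℂ)
        + (-1 : ℝ) • (Vᴴ * Z * V) + (-(a * b) : ℝ) • (Vᴴ * Z⁻¹ * V))) := by
    ext i j
    simp only [Matrix.sub_apply, Matrix.add_apply, Matrix.smul_apply, Complex.real_smul,
      Matrix.one_apply]
    push_cast
    by_cases hij : i = j <;> simp [hij] <;> field_simp <;> ring
  rw [heq]
  exact h2.add h5
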